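/- Let $R : [0, T] \to \mathbb{R}$ be twice continuously differentiable with $R(0) = 0$ and $R'(0) = 0$, and suppose $R''(t) = g(t) \prod_{i=1}^{s} (t - c_i h) + E(t)$ for all $t \in [0,T]$, where $g$ is continuous, $c_1, \dots, c_s$ are fixed reals, $h \in (0, T]$, and $\sup_{t} |E(t)| \le C h^{s+1}$ for a constant $C$ independent of $h$. Then $|R'(h)| \le h^{s+1}\big( \sup_{\xi \in [0,1]} |g(\xi h)| \cdot \max_{\xi \in [0,1]} \prod_{i=1}^{s} |\xi - c_i| + C h \big)$, i.e., $R'(h) = O(h^{s+1})$. -/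

import Mathlib

theorem stmt_10 (s : ℕ) (c : Fin s → ℝ) (T : ℝ) (hT : 0 < T)
    (R R' R'' g E : ℝ → ℝ) (h : ℝ) (hh : 0 < h) (hhT : h ≤ T)
    (hR' : ∀ t ∈ Set.Icc 0 T, HasDerivWithinAt R (R' t) (Set.Icc 0 T) t)
    (hR'' : ∀ t ∈ Set.Icc 0 T, HasDerivWithinAt R' (R'' t) (Set.Icc 0 T) t)
    (hR''cont : ContinuousOn R'' (Set.Icc 0 T))
    (hgcont : ContinuousOn g (Set.Icc 0 T))
    (hR0 : R 0 = 0) (hR'0 : R' 0 = 0)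
    (hdecomp : ∀ t ∈ Set.Icc 0 T, R'' t = g t * (∏ i, (t - c i * h)) + E t)
    (C : ℝ) (hE : ∀ t ∈ Set.Icc 0 T, |E t| ≤ C * h ^ (s + 1)) :
    |R' h| ≤ h ^ (s + 1) *
      (sSup ((fun ξ => |g (ξ * h)|) '' Set.Icc (0:ℝ) 1) *
        sSup ((fun ξ => ∏ i, |ξ - c i|) '' Set.Icc (0:ℝ) 1) + C * h) := by
  set Sg := sSup ((fun ξ => |g (ξ * h)|) '' Set.Icc (0:ℝ) 1) with hSgdef
  set Sp := sSup ((fun ξ => ∏ i, |ξ - c i|) '' Set.Icc (0:ℝ) 1) with hSpdef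
  have hsub : Set.Icc (0:ℝ) h ⊆ Set.Icc 0 T := Set.Icc_subset_Icc le_rfl hhT
  have hcont1 : ContinuousOn (fun ξ : ℝ => |g (ξ * h)|) (Set.Icc 0 1) := by
    apply ContinuousOn.abs
    apply hgcont.comp (continuous_mul_right h).continuousOn
    intro ξ hξ
    exact ⟨mul_nonneg hξ.1 hh.le, (mul_le_of_le_one_left hh.le hξ.2).trans hhT⟩
  have hcont2 : Continuous (fun ξ : ℝ => ∏ i, |ξ - c i|) := by
    exact continuous_finset_prod _ fun i _ => (continuous_id.sub continuous_const).abs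
  have hbdd1 : BddAbove ((fun ξ : ℝ => |g (ξ * h)|) '' Set.Icc 0 1) :=
    (isCompact_Icc.image_of_continuousOn hcont1).bddAbove
  have hbdd2 : BddAbove ((fun ξ : ℝ => ∏ i, |ξ - c i|) '' Set.Icc 0 1) :=
    (isCompact_Icc.image_of_continuousOn hcont2.continuousOn).bddAbove
  have hSg0 : 0 ≤ Sg := le_trans (abs_nonneg _) (le_csSup hbdd1 ⟨0, Set.left_mem_Icc.mpr zero_le_one, rfl⟩)
  have hSp0 : 0 ≤ Sp := le_trans (Finset.prod_nonneg fun i _ => abs_nonneg _)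
    (le_csSup hbdd2 ⟨0, Set.left_mem_Icc.mpr zero_le_one, rfl⟩)
  have hR'cont : ContinuousOn R' (Set.Icc 0 h) :=
    fun t ht => ((hR'' t (hsub ht)).continuousWithinAt).mono hsub
  have hderiv : ∀ t ∈ Set.Ioo (0:ℝ) h, HasDerivWithinAt R' (R'' t) (Set.Ioi t) t := by
    intro t ht
    have hmem : Set.Icc 0 T ∈ nhds t := Icc_mem_nhds (by linarith [ht.1]) (by linarith [ht.2])
    exact ((hR'' t (hsub ⟨ht.1.le, ht.2.le⟩)).hasDerivAt hmem).hasDerivWithinAt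
  have hint : IntervalIntegrable R'' MeasureTheory.volume 0 h :=
    (hR''cont.mono (by rw [Set.uIcc_of_le hh.le]; exact hsub)).intervalIntegrable
  have heq : ∫ t in (0:ℝ)..h, R'' t = R' h - R' 0 :=
    intervalIntegral.integral_eq_sub_of_hasDeriv_right_of_le hh.le hR'cont hderiv hint
  have key : ∀ t ∈ Set.uIoc (0:ℝ) h, ‖R'' t‖ ≤ h ^ s * Sg * Sp + C * h ^ (s + 1) := by
    intro t ht
    rw [Set.uIoc_of_le hh.le] at ht
    have htT : t ∈ Set.Icc 0 T := ⟨ht.1.le, ht.2.trans hhT⟩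
    have hξ : t / h ∈ Set.Icc (0:ℝ) 1 := ⟨div_nonneg ht.1.le hh.le, (div_le_one hh).mpr ht.2⟩
    have hg_le : |g t| ≤ Sg := by
      have hm : |g ((t / h) * h)| ∈ (fun ξ : ℝ => |g (ξ * h)|) '' Set.Icc 0 1 := ⟨t / h, hξ, rfl⟩
      have := le_csSup hbdd1 hm
      rwa [div_mul_cancel₀ _ hh.ne'] at this
    have hp_le : ∏ i, |t / h - c i| ≤ Sp := le_csSup hbdd2 ⟨t / h, hξ, rfl⟩
    have hprod : ∏ i, |t - c i * h| = h ^ s * ∏ i, |t / h - c i| := by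
      have : ∀ i : Fin s, |t - c i * h| = h * |t / h - c i| := by
        intro i
        have he : t - c i * h = h * (t / h - c i) := by field_simp
        rw [he, abs_mul, abs_of_pos hh]
      calc ∏ i, |t - c i * h| = ∏ i, (h * |t / h - c i|) := Finset.prod_congr rfl fun i _ => this i
        _ = h ^ s * ∏ i, |t / h - c i| := by
            rw [Finset.prod_mul_distrib, Finset.prod_const, Finset.card_univ, Fintype.card_fin]
    have hEa := hE t htT
    rw [Real.norm_eq_abs, hdecomp t htT]
    calc |g t * (∏ i, (t - c i * h)) + E t| ≤ |g t * ∏ i, (t - c i * h)| + |E t| := abs_add_le _ _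
      _ = |g t| * ∏ i, |t - c i * h| + |E t| := by rw [abs_mul, Finset.abs_prod]
      _ ≤ Sg * (h ^ s * Sp) + C * h ^ (s + 1) := by
          refine add_le_add ?_ hEa
          rw [hprod]
          apply mul_le_mul hg_le ?_ (by positivity) hSg0
          exact mul_le_mul_of_nonneg_left hp_le (by positivity)
      _ = h ^ s * Sg * Sp + C * h ^ (s + 1) := by ring
  have hbound := intervalIntegral.norm_integral_le_of_norm_le_const key
  rw [heq, hR'0, sub_zero, Real.norm_eq_abs, sub_zero, abs_of_pos hh] at hbound
  calc |R' h| ≤ (h ^ s * Sg * Sp + C * h ^ (s + 1)) * h := hbound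
    _ = h ^ (s + 1) * (Sg * Sp + C * h) := by ring
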